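/- Assume GDC(ℕ, B, T) holds for every type B and every T : Set (List (ℕ × B)). Then (using classical logic) EMPCF(ℕ, B, T) holds for every type B and every T : Set (List (ℕ × B)). -/

import Mathlib

namespace Paper

universe u v

/-- `listSub u α` : every element of the list `u` belongs to `α` (written `u ⊂ α`). -/
def listSub {A : Type u} (u : List A) (α : Set A) : Prop := ∀ a ∈ u, a ∈ α

/-- `⟨T⟩` : the sets all of whose finite sublists are in `T`. -/
def eng {A : Type u} (T : Set (List A)) : Set (Set A) :=
  {α | ∀ l : List A, listSub l α → l ∈ T}

/-- `⟨T⟩∃` : the sets having some finite sublist in `T`. -/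
def engE {A : Type u} (T : Set (List A)) : Set (Set A) :=
  {α | ∃ l : List A, listSub l α ∧ l ∈ T}

/-- `û` : the set of elements of the list `u`. -/
def hat {A : Type u} (l : List A) : Set A := {a | a ∈ l}

/-- `⌊P⌋` : the lists whose set of elements is in `P`. -/
def res {A : Type u} (P : Set (Set A)) : Set (List A) := {l | hat l ∈ P}

/-- Domain of a decidable partial function. -/
def ddom {A : Type u} {B : Type v} (f : A → Option B) : Set A := {a | f a ≠ none}

/-- Graph of a decidable partial function. -/
def dgraph {A : Type u} {B : Type v} (f : A → Option B) : Set (A × B) :=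
  {p | f p.1 = some p.2}

/-- `g ≺ f` for decidable partial functions: `g` extends `f` by one new point. -/
def dext {A : Type u} {B : Type v} (g f : A → Option B) : Prop :=
  ∃ a, a ∉ ddom f ∧ ddom g = ddom f ∪ {a} ∧ ∀ x ∈ ddom f, f x = g x

/-- `f` is dpf-maximal in `P`. -/
def MaxDPF {A : Type u} {B : Type v} (P : Set (Set (A × B))) (f : A → Option B) : Prop :=
  dgraph f ∈ P ∧ ∀ g : A → Option B, dext g f → dgraph g ∉ P

/-- `EMPCF(A,B,T)` : existence of a maximal decidable partial choice function. -/
def EMPCF {A : Type u} {B : Type v} (T : Set (List (A × B))) : Prop :=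
  (∃ α : Set (A × B), α ∈ eng T) → ∃ f : A → Option B, MaxDPF (eng T) f

/-- The operator `φ` used to define `A`-`B`-approximability. -/
def phi {A : Type u} {B : Type v} (T X : Set (List (A × B))) : Set (List (A × B)) :=
  {l | l ∈ res (eng T) ∧ ∀ a : A, (¬ ∃ b, (a, b) ∈ l) → ∃ b, l ++ [(a, b)] ∈ X}

/-- `T` is `A`-`B`-approximable: `[]` is in the greatest fixed point of `φ`,
equivalently there is a `φ`-dense set containing `[]`. -/
def Approximable {A : Type u} {B : Type v} (T : Set (List (A × B))) : Prop :=
  ∃ X : Set (List (A × B)), X ⊆ phi T X ∧ [] ∈ X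

/-- `T` has an `A`-`B`-choice function. -/
def HasChoiceFun {A : Type u} {B : Type v} (T : Set (List (A × B))) : Prop :=
  ∃ f : A → B, ∀ l : List (A × B), listSub l {p : A × B | f p.1 = p.2} → l ∈ T

/-- Generalised dependent choice. -/
def GDC {A : Type u} {B : Type v} (T : Set (List (A × B))) : Prop :=
  Approximable T → HasChoiceFun T

-- auxiliary
lemma eng_mono {A : Type u} {T : Set (List A)} {α β : Set A}
    (hα : α ∈ eng T) (hs : β ⊆ α) : β ∈ eng T :=
  fun l hl => hα l (fun a ha => hs (hl a ha))

abbrev BB (B : Type v) : Type v := B ⊕ (B → List (ℕ × B))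

def someSet {B : Type v} (u : List (ℕ × BB B)) : Set (ℕ × B) :=
  {p | (p.1, Sum.inl p.2) ∈ u}

def T2 {B : Type v} (T : Set (List (ℕ × B))) : Set (List (ℕ × BB B)) :=
  {u | someSet u ∈ eng T ∧
    ∀ a w, (a, Sum.inr w) ∈ u → ∀ b : B, w b ∉ T ∧
      ∀ p ∈ w b, p ≠ (a, b) → ∀ β, (p.1, β) ∈ u → β = Sum.inl p.2}

def Good {B : Type v} (T : Set (List (ℕ × B))) (u : List (ℕ × BB B)) : Prop :=
  someSet u ∈ eng T ∧
  (∀ x : ℕ, ∀ β₁ β₂ : BB B, (x, β₁) ∈ u → (x, β₂) ∈ u → β₁ = β₂) ∧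
  ∀ a w, (a, Sum.inr w) ∈ u → ∀ b : B, w b ∉ T ∧
    ∀ p ∈ w b, p = (a, b) ∨ (p.1, Sum.inl p.2) ∈ u

lemma good_res {B : Type v} {T : Set (List (ℕ × B))} {u : List (ℕ × BB B)}
    (hu : Good T u) : u ∈ res (eng (T2 T)) := by
  intro l hl
  refine ⟨eng_mono hu.1 (fun p hp => hl _ hp), ?_⟩
  intro a w haw b
  have haw' : (a, Sum.inr w) ∈ u := hl _ haw
  obtain ⟨hnt, hsup⟩ := hu.2.2 a w haw' b
  refine ⟨hnt, fun p hp hne β hβ => ?_⟩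
  rcases hsup p hp with h1 | h2
  · exact absurd h1 hne
  · exact hu.2.1 p.1 β _ (hl _ hβ) h2

lemma good_ext {B : Type v} {T : Set (List (ℕ × B))} {u : List (ℕ × BB B)}
    (hu : Good T u) (a : ℕ) (hfresh : ¬ ∃ β : BB B, (a, β) ∈ u) :
    ∃ β : BB B, Good T (u ++ [(a, β)]) := by
  by_cases hb : ∃ b : B, (someSet u ∪ {(a, b)} : Set (ℕ × B)) ∈ eng T
  · obtain ⟨b, hb⟩ := hb
    refine ⟨Sum.inl b, ?_, ?_, ?_⟩
    · refine eng_mono hb ?_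
      intro p hp
      simp only [someSet, Set.mem_setOf_eq, List.mem_append, List.mem_singleton] at hp
      rcases hp with hp | hp
      · exact Or.inl hp
      · right
        have h1 : p.1 = a := congrArg Prod.fst hp
        have h2 : Sum.inl p.2 = (Sum.inl b : BB B) := congrArg Prod.snd hp
        have h2' : p.2 = b := by injection h2
        exact Prod.ext h1 h2'
    · intro x β₁ β₂ h1 h2
      simp only [List.mem_append, List.mem_singleton] at h1 h2
      rcases h1 with h1 | h1 <;> rcases h2 with h2 | h2
      · exact hu.2.1 x β₁ β₂ h1 h2
      · injection h2 with hxa _; exact absurd ⟨β₁, hxa ▸ h1⟩ hfresh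
      · injection h1 with hxa _; exact absurd ⟨β₂, hxa ▸ h2⟩ hfresh
      · rw [(by injection h1 : β₁ = Sum.inl b), (by injection h2 : β₂ = Sum.inl b)]
    · intro a' w hw b'
      have hw' : (a', Sum.inr w) ∈ u := by
        rcases List.mem_append.1 hw with h1 | h1
        · exact h1
        · exact absurd (by injection List.mem_singleton.1 h1) (by simp : (Sum.inr w : BB B) ≠ Sum.inl b)
      obtain ⟨hnt, hsup⟩ := hu.2.2 a' w hw' b'
      exact ⟨hnt, fun p hp => (hsup p hp).imp id (fun h => List.mem_append.2 (Or.inl h))⟩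
  · have hch : ∀ b : B, ∃ v : List (ℕ × B), listSub v (someSet u ∪ {(a, b)}) ∧ v ∉ T := by
      intro b
      by_contra hc
      push_neg at hc
      exact hb ⟨b, fun l hl => hc l hl⟩
    choose w hw1 hw2 using hch
    refine ⟨Sum.inr w, ?_, ?_, ?_⟩
    · refine eng_mono hu.1 ?_
      intro p hp
      simp only [someSet, Set.mem_setOf_eq, List.mem_append, List.mem_singleton] at hp ⊢
      rcases hp with hp | hp
      · exact hp
      · exact absurd (congrArg Prod.snd hp) (by simp)
    · intro x β₁ β₂ h1 h2
      simp only [List.mem_append, List.mem_singleton] at h1 h2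
      rcases h1 with h1 | h1 <;> rcases h2 with h2 | h2
      · exact hu.2.1 x β₁ β₂ h1 h2
      · injection h2 with hxa _; exact absurd ⟨β₁, hxa ▸ h1⟩ hfresh
      · injection h1 with hxa _; exact absurd ⟨β₂, hxa ▸ h2⟩ hfresh
      · rw [(by injection h1 : β₁ = Sum.inr w), (by injection h2 : β₂ = Sum.inr w)]
    · intro a' w' hw' b'
      rcases List.mem_append.1 hw' with h1 | h1
      · obtain ⟨hnt, hsup⟩ := hu.2.2 a' w' h1 b'
        exact ⟨hnt, fun p hp => (hsup p hp).imp id (fun h => List.mem_append.2 (Or.inl h))⟩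
      · have ha' : a' = a := by injection List.mem_singleton.1 h1
        have hww : w' = w := by
          have := congrArg Prod.snd (List.mem_singleton.1 h1)
          injection this
        subst ha'; subst hww
        refine ⟨hw2 b', fun p hp => ?_⟩
        rcases hw1 b' p hp with h | h
        · exact Or.inr (List.mem_append.2 (Or.inl h))
        · exact Or.inl h

/-- if `GDC(ℕ, B, T)` holds for every `B` and `T`, then
`EMPCF(ℕ, B, T)` holds for every `B` and `T`. -/
theorem GDC_nat_implies_EMPCF_nat
    (h : ∀ (B : Type u) (T : Set (List (ℕ × B))), GDC T) :
    ∀ (B : Type u) (T : Set (List (ℕ × B))), EMPCF T := by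
  intro B T hex
  obtain ⟨α, hα⟩ := hex
  have hgoodnil : Good T ([] : List (ℕ × BB B)) := by
    refine ⟨eng_mono hα ?_, ?_, ?_⟩
    · intro p hp; exact absurd hp List.not_mem_nil
    · intro x β₁ β₂ h1 _; exact absurd h1 List.not_mem_nil
    · intro a w hw; exact absurd hw List.not_mem_nil
  have happ : Approximable (T2 T) := by
    refine ⟨{u | Good T u}, ?_, hgoodnil⟩
    intro u hu
    exact ⟨good_res hu, fun a hf => good_ext hu a hf⟩
  obtain ⟨f', hf'⟩ := h (BB B) (T2 T) happ
  set f : ℕ → Option B := fun a => Sum.elim some (fun _ => none) (f' a) with hfdef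
  have hgraph : dgraph f ∈ eng T := by
    intro l hl
    have hmap : listSub (l.map (fun p => (p.1, (Sum.inl p.2 : BB B))))
        {p : ℕ × BB B | f' p.1 = p.2} := by
      intro q hq
      obtain ⟨p, hp, rfl⟩ := List.mem_map.1 hq
      have hfp : f p.1 = some p.2 := hl p hp
      show f' p.1 = Sum.inl p.2
      cases hcase : f' p.1 with
      | inl c =>
        have hc : some c = some p.2 := by rw [hfdef] at hfp; simpa [hcase] using hfp
        rw [Option.some_inj.1 hc]
      | inr w => exfalso; rw [hfdef] at hfp; simp [hcase] at hfp
    have hT2 := hf' _ hmap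
    exact hT2.1 l (fun p hp => List.mem_map.2 ⟨p, hp, rfl⟩)
  refine ⟨f, hgraph, ?_⟩
  rintro g ⟨a, hadom, hdomeq, hagree⟩ hcon
  have hfa : f a = none := not_not.1 hadom
  obtain ⟨w, hfw⟩ : ∃ w, f' a = Sum.inr w := by
    cases hcase : f' a with
    | inl c => exfalso; rw [hfdef] at hfa; simp [hcase] at hfa
    | inr w => exact ⟨w, rfl⟩
  have hag : a ∈ ddom g := hdomeq ▸ Set.mem_union_right _ (Set.mem_singleton a)
  obtain ⟨b, hb⟩ : ∃ b, g a = some b := Option.ne_none_iff_exists'.1 hag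
  set u : List (ℕ × BB B) := (a, Sum.inr w) :: (w b).map (fun p => (p.1, f' p.1)) with hudef
  have hu : listSub u {p : ℕ × BB B | f' p.1 = p.2} := by
    intro q hq
    rcases List.mem_cons.1 hq with h1 | h1
    · subst h1; exact hfw
    · obtain ⟨p, hp, rfl⟩ := List.mem_map.1 h1
      rfl
  have hT2 := hf' u hu
  obtain ⟨hnt, hcond⟩ := hT2.2 a w List.mem_cons_self b
  refine hnt (hcon (w b) ?_)
  intro p hp
  by_cases hpe : p = (a, b)
  · subst hpe; exact hb
  · have hmem : (p.1, f' p.1) ∈ u := List.mem_cons.2 (Or.inr (List.mem_map.2 ⟨p, hp, rfl⟩))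
    have hfl : f' p.1 = Sum.inl p.2 := hcond p hp hpe (f' p.1) hmem
    have hfp : f p.1 = some p.2 := by rw [hfdef]; simp [hfl]
    have hd : p.1 ∈ ddom f := by simp [ddom, hfp]
    show g p.1 = some p.2
    rw [← hagree p.1 hd]; exact hfp


end Paper
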